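/- (Any learner with few parameters fails to learn subsampled inner products.) Let α, k, ℓ, n, r₁, r₂, β ∈ ℕ and η ≥ 0. Let Enc: 𝔽_{2^ℓ}^k → 𝔽_{2^ℓ}ⁿ be the Reed–Solomon encoding with dimension k and block length n ≤ 2^ℓ. Let samp₁: {0,1}^{r₁} → (size-kℓ subsets of {1,…,α}) be a function such that for every distribution X on {0,1}^α with H_∞(X) ≥ α/4 there exists a distribution Y on {0,1}^{kℓ} with H_∞(Y) ≥ kℓ/5 and SD((u₁, X|_{samp₁(u₁)}), (u₁, Y)) ≤ η, where u₁ is uniform on {0,1}^{r₁}. Fix an arbitrary string Q ∈ {0,1}^β, an arbitrary function samp₂: {0,1}^{r₂} → (size-nℓ subsets of {1,…,β}), and arbitrary injective encodings [·] of u₁ and u₂. Let P be uniformly distributed on {0,1}^α, and define the example distribution: sample u₁ ← {0,1}^{r₁}, u₂ ← {0,1}^{r₂}, m ← 𝔽_{2^ℓ}^k independently and uniformly; set the instance x = ([u₁], [u₂], m, Enc(m) + Q|_{samp₂(u₂)}) (additions coordinatewise in 𝔽_{2^ℓ}, with Q|_{samp₂(u₂)} read as a vector in 𝔽_{2^ℓ}ⁿ)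 and the label y = ⟨m, P|_{samp₁(u₁)}⟩ computed over 𝔽₂ with m read as a kℓ-bit string. Let Z be any random variable jointly distributed with P whose support has size at most 2^{α/2} (e.g., the model output by an arbitrary learner given arbitrarily many labeled examples), and for each value z let f_z be any classifier. Then for a fresh example (x, y) drawn from this distribution independently of Z conditioned on P: Pr[ f_Z(x) = y ] ≤ 1/2 + 2^{−α/4} + η + 2^{−kℓ/10}. -/

import Mathlib

open Finset

/-- Statistical distance between two (mass functions of) distributions on a finite set. -/
noncomputable def SD {Ω : Type*} [Fintype Ω] (p q : Ω → ℝ) : ℝ :=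
  (∑ ω, |p ω - q ω|) / 2

/-- Min-entropy of a distribution on a finite set: `-log₂ (max_ω p ω)`. -/
noncomputable def minEntropy {Ω : Type*} [Fintype Ω] (p : Ω → ℝ) : ℝ :=
  - Real.logb 2 (⨆ ω, p ω)

/-- Inner product over 𝔽₂. -/
def ip {N : ℕ} (x y : Fin N → ZMod 2) : ZMod 2 := ∑ i, x i * y i

/-- Restriction `x|_S` of a string `x ∈ {0,1}^N` to a subset `S` of size `t`, listing the
coordinates of `S` in increasing order. -/
def restrict {N t : ℕ} (x : Fin N → ZMod 2) (S : Finset (Fin N)) (h : S.card = t) :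
    Fin t → ZMod 2 :=
  fun j => x ((S.orderIsoOfFin h j : Fin N))

/-- Reed–Solomon encoding with dimension `k`, block length `n` and (distinct)
evaluation points `a : Fin n → F`:  `m ↦ (f_m(a₁), …, f_m(a_n))`. -/
def rsEnc {F : Type*} [Field F] (k n : ℕ) (a : Fin n → F) (m : Fin k → F) : Fin n → F :=
  fun i => ∑ j : Fin k, m j * a i ^ (j : ℕ)

/-- Reading an `n·ℓ`-bit string as a vector in `𝔽_{2^ℓ}ⁿ`, via a fixed identification
`toF` of `{0,1}^ℓ` with the field. -/
def vecOf {F : Type*} (ℓ n : ℕ) (toF : (Fin ℓ → ZMod 2) ≃ F)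
    (y : Fin (n * ℓ) → ZMod 2) : Fin n → F :=
  fun i => toF (fun b => y (finProdFinEquiv (i, b)))

/-- Reading a vector `m ∈ F^k` as a `k·ℓ`-bit string, via a fixed identification `toF`
of `{0,1}^ℓ` with the field. -/
def bitsOf {F : Type*} (ℓ k : ℕ) (toF : (Fin ℓ → ZMod 2) ≃ F)
    (m : Fin k → F) : Fin (k * ℓ) → ZMod 2 :=
  fun j => toF.symm (m (finProdFinEquiv.symm j).1) (finProdFinEquiv.symm j).2

noncomputable def ch (x : ZMod 2) : ℝ := if x = 0 then 1 else -1

lemma zmod2_cases (x : ZMod 2) : x = 0 ∨ x = 1 := by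
  revert x; decide

lemma zmod2_eq_one {a : ZMod 2} (h : a ≠ 0) : a = 1 := by
  revert h; revert a; decide

lemma ch_add (a b : ZMod 2) : ch (a + b) = ch a * ch b := by
  rcases zmod2_cases a with rfl | rfl <;> rcases zmod2_cases b with rfl | rfl <;>
    simp [ch, show (1:ZMod 2)+1 = 0 by decide, show (1:ZMod 2) ≠ 0 by decide] <;> norm_num

lemma ch_sq (a : ZMod 2) : ch a * ch a = 1 := by
  rcases zmod2_cases a with rfl | rfl <;>
    norm_num [ch, show (1:ZMod 2) ≠ 0 by decide]

lemma ind_eq (x y : ZMod 2) : (if x = y then (1:ℝ) else 0) = (1 + ch x * ch y) / 2 := by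
  rcases zmod2_cases x with rfl | rfl <;> rcases zmod2_cases y with rfl | rfl <;>
    norm_num [ch, show (1:ZMod 2) ≠ 0 by decide, show (0:ZMod 2) ≠ 1 by decide]

lemma zmod2_add_eq_zero (a b : ZMod 2) : a + b = 0 ↔ a = b := by
  revert a b; decide

lemma ip_add_left {N : ℕ} (x y v : Fin N → ZMod 2) : ip (x + y) v = ip x v + ip y v := by
  simp [ip, add_mul, Finset.sum_add_distrib]

lemma ip_single {N : ℕ} (w : Fin N → ZMod 2) (i : Fin N) :
    ip (Pi.single i 1) w = w i := by
  simp [ip, Pi.single_apply, ite_mul]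

lemma char_sum {N : ℕ} (w : Fin N → ZMod 2) :
    ∑ v : Fin N → ZMod 2, ch (ip w v) = if w = 0 then (2:ℝ)^N else 0 := by
  split_ifs with h
  · subst h
    simp [ip, ch, Finset.card_univ]
  · -- some coordinate is nonzero, i.e. 1
    have ⟨i, hi⟩ : ∃ i, w i ≠ 0 := by
      by_contra hc; push_neg at hc; exact h (funext hc)
    have hwi : w i = 1 := zmod2_eq_one hi
    have key := Equiv.sum_comp (Equiv.addLeft (Pi.single i 1 : Fin N → ZMod 2))
      (fun v => ch (ip w v))
    simp only [Equiv.coe_addLeft] at key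
    have hflip : ∀ v : Fin N → ZMod 2, ch (ip w (Pi.single i 1 + v)) = - ch (ip w v) := by
      intro v
      have : ip w (Pi.single i 1 + v) = 1 + ip w v := by
        simp only [ip, Pi.add_apply, mul_add, Finset.sum_add_distrib]
        congr 1
        simp [Pi.single_apply, mul_ite, hwi]
      rw [this, ch_add]
      simp only [ch, if_neg (one_ne_zero : (1:ZMod 2) ≠ 0)]
      ring
    rw [Finset.sum_congr rfl (fun v _ => hflip v), Finset.sum_neg_distrib] at key
    linarith [key]
lemma ip_add_right {N : ℕ} (w x y : Fin N → ZMod 2) : ip w (x + y) = ip w x + ip w y := by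
  simp [ip, mul_add, Finset.sum_add_distrib]

lemma parseval {N : ℕ} (h : (Fin N → ZMod 2) → ℝ) (hsq : ∀ s, h s * h s = 1) :
    ∑ v : Fin N → ZMod 2, ((1/2^N : ℝ) * ∑ s : Fin N → ZMod 2, h s * ch (ip s v))^2 = 1 := by
  have expand : ∀ v : Fin N → ZMod 2,
      (∑ s : Fin N → ZMod 2, h s * ch (ip s v))^2
        = ∑ s : Fin N → ZMod 2, ∑ t : Fin N → ZMod 2, h s * h t * ch (ip (s + t) v) := by
    intro v
    rw [sq, Finset.sum_mul_sum]
    refine Finset.sum_congr rfl fun s _ => Finset.sum_congr rfl fun t _ => ?_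
    rw [ip_add_left, ch_add]; ring
  have swap : ∑ v : Fin N → ZMod 2, ∑ s : Fin N → ZMod 2, ∑ t : Fin N → ZMod 2,
        h s * h t * ch (ip (s + t) v)
      = ∑ s : Fin N → ZMod 2, ∑ t : Fin N → ZMod 2, h s * h t *
        ∑ v : Fin N → ZMod 2, ch (ip (s + t) v) := by
    rw [Finset.sum_comm]
    refine Finset.sum_congr rfl fun s _ => ?_
    rw [Finset.sum_comm]
    refine Finset.sum_congr rfl fun t _ => ?_
    rw [Finset.mul_sum]
  have diag : ∀ s t : Fin N → ZMod 2, s + t = 0 ↔ s = t := by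
    intro s t
    constructor
    · intro hst; funext j
      exact (zmod2_add_eq_zero (s j) (t j)).1 (congrFun hst j)
    · intro hst; funext j
      exact (zmod2_add_eq_zero (s j) (t j)).2 (congrFun hst j)
  calc ∑ v : Fin N → ZMod 2, ((1/2^N : ℝ) * ∑ s : Fin N → ZMod 2, h s * ch (ip s v))^2
      = (1/2^N : ℝ)^2 * ∑ v : Fin N → ZMod 2, (∑ s : Fin N → ZMod 2, h s * ch (ip s v))^2 := by
        rw [Finset.mul_sum]; refine Finset.sum_congr rfl fun v _ => by ring
    _ = (1/2^N : ℝ)^2 * ∑ s : Fin N → ZMod 2, ∑ t : Fin N → ZMod 2, h s * h t *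
          ∑ v : Fin N → ZMod 2, ch (ip (s + t) v) := by
        rw [Finset.sum_congr rfl fun v _ => expand v, swap]
    _ = (1/2^N : ℝ)^2 * ∑ s : Fin N → ZMod 2, ∑ t : Fin N → ZMod 2, h s * h t *
          (if s = t then (2:ℝ)^N else 0) := by
        congr 1
        refine Finset.sum_congr rfl fun s _ => Finset.sum_congr rfl fun t _ => ?_
        rw [char_sum (s + t)]
        congr 1
        simp [diag s t]
    _ = (1/2^N : ℝ)^2 * ∑ s : Fin N → ZMod 2, (2:ℝ)^N := by
        congr 1
        refine Finset.sum_congr rfl fun s _ => ?_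
        rw [Finset.sum_eq_single s]
        · simp [hsq s]
        · intro t _ hts; simp [Ne.symm hts]
        · intro hs; exact absurd (Finset.mem_univ s) hs
    _ = 1 := by
        simp only [Finset.sum_const, Finset.card_univ]
        rw [show Fintype.card (Fin N → ZMod 2) = 2^N by simp only [Fintype.card_fun, ZMod.card, Fintype.card_fin]]
        simp only [nsmul_eq_mul]
        push_cast
        rw [div_pow, one_pow, ← pow_mul, ← pow_add, show N*2 = N+N from by ring]
        field_simp
lemma core_gl {N : ℕ} (g : (Fin N → ZMod 2) → ZMod 2) (Y : (Fin N → ZMod 2) → ℝ)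
    (hY0 : ∀ v, 0 ≤ Y v) (hY1 : ∑ v, Y v = 1) (θ : ℝ) (hθ : 0 ≤ θ) (hYθ : ∀ v, Y v ≤ θ) :
    ∑ v : Fin N → ZMod 2, Y v *
        ((1/2^N : ℝ) * ∑ s : Fin N → ZMod 2, (if g s = ip s v then (1:ℝ) else 0))
      ≤ 1/2 + Real.sqrt θ / 2 := by
  set hc : (Fin N → ZMod 2) → ℝ := fun s => ch (g s) with hhc
  set hhat : (Fin N → ZMod 2) → ℝ :=
    fun v => (1/2^N : ℝ) * ∑ s : Fin N → ZMod 2, hc s * ch (ip s v) with hhhat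
  have h2N : (2:ℝ)^N ≠ 0 := by positivity
  have hcard : ((Fintype.card (Fin N → ZMod 2)) : ℝ) = 2^N := by
    rw [show Fintype.card (Fin N → ZMod 2) = 2^N by simp only [Fintype.card_fun, ZMod.card, Fintype.card_fin]]
    push_cast; ring
  have key : ∀ v, (1/2^N : ℝ) * ∑ s : Fin N → ZMod 2, (if g s = ip s v then (1:ℝ) else 0)
      = 1/2 + hhat v / 2 := by
    intro v
    have hthis : ∀ s : Fin N → ZMod 2, (if g s = ip s v then (1:ℝ) else 0)
        = 1/2 + (hc s * ch (ip s v))/2 := by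
      intro s; rw [ind_eq]; ring
    have hone : ∑ s : Fin N → ZMod 2, (if g s = ip s v then (1:ℝ) else 0)
        = 2^N * (1/2) + (∑ s : Fin N → ZMod 2, hc s * ch (ip s v)) / 2 := by
      rw [Finset.sum_congr rfl fun s _ => hthis s, Finset.sum_add_distrib,
          Finset.sum_const, Finset.card_univ, nsmul_eq_mul, hcard, ← Finset.sum_div]
    rw [hone, hhhat]
    field_simp
  rw [Finset.sum_congr rfl fun v _ => by rw [key v]]
  have hdistr : ∀ v : Fin N → ZMod 2, Y v * (1/2 + hhat v / 2)
      = Y v * (1/2) + Y v * (hhat v / 2) := fun v => by ring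
  rw [Finset.sum_congr rfl fun v _ => hdistr v, Finset.sum_add_distrib]
  have h1 : ∑ v : Fin N → ZMod 2, Y v * (1/2) = 1/2 := by
    rw [← Finset.sum_mul, hY1]; ring
  have hpar : ∑ v : Fin N → ZMod 2, (hhat v)^2 = 1 :=
    parseval hc (fun s => ch_sq (g s))
  have hcs : (∑ v : Fin N → ZMod 2, Y v * hhat v)^2 ≤ θ := by
    calc (∑ v : Fin N → ZMod 2, Y v * hhat v)^2
        ≤ (∑ v : Fin N → ZMod 2, (Y v)^2) * ∑ v : Fin N → ZMod 2, (hhat v)^2 :=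
          Finset.sum_mul_sq_le_sq_mul_sq _ _ _
      _ = ∑ v : Fin N → ZMod 2, (Y v)^2 := by rw [hpar, mul_one]
      _ ≤ ∑ v : Fin N → ZMod 2, θ * Y v := by
          refine Finset.sum_le_sum fun v _ => ?_
          rw [sq]
          exact mul_le_mul_of_nonneg_right (hYθ v) (hY0 v)
      _ = θ := by rw [← Finset.mul_sum, hY1, mul_one]
  have hbias : ∑ v : Fin N → ZMod 2, Y v * hhat v ≤ Real.sqrt θ := by
    calc ∑ v : Fin N → ZMod 2, Y v * hhat v ≤ |∑ v : Fin N → ZMod 2, Y v * hhat v| :=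
        le_abs_self _
      _ = Real.sqrt ((∑ v : Fin N → ZMod 2, Y v * hhat v)^2) := (Real.sqrt_sq_eq_abs _).symm
      _ ≤ Real.sqrt θ := Real.sqrt_le_sqrt hcs
  have : ∑ v : Fin N → ZMod 2, Y v * (hhat v / 2)
      = (∑ v : Fin N → ZMod 2, Y v * hhat v) / 2 := by
    rw [Finset.sum_div]
    exact Finset.sum_congr rfl fun v _ => by ring
  rw [h1, this]
  linarith [hbias]

lemma sd_transfer {Ω : Type*} [Fintype Ω] (p q G : Ω → ℝ)
    (hpq : ∑ ω, p ω = ∑ ω, q ω) (hG0 : ∀ ω, 0 ≤ G ω) (hG1 : ∀ ω, G ω ≤ 1) :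
    ∑ ω, p ω * G ω ≤ ∑ ω, q ω * G ω + SD p q := by
  have key : ∑ ω, p ω * G ω - ∑ ω, q ω * G ω
      = ∑ ω, (p ω - q ω) * (G ω - 1/2) := by
    rw [← Finset.sum_sub_distrib]
    have : ∑ ω, (p ω - q ω) * (1/2 : ℝ) = 0 := by
      rw [← Finset.sum_mul, Finset.sum_sub_distrib, hpq]
      ring
    calc ∑ ω, (p ω * G ω - q ω * G ω) = ∑ ω, ((p ω - q ω) * (G ω - 1/2) + (p ω - q ω) * (1/2)) := by
          exact Finset.sum_congr rfl fun ω _ => by ring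
      _ = _ := by rw [Finset.sum_add_distrib, this, add_zero]
  have hb : ∑ ω, (p ω - q ω) * (G ω - 1/2) ≤ ∑ ω, |p ω - q ω| * (1/2) := by
    refine Finset.sum_le_sum fun ω _ => ?_
    calc (p ω - q ω) * (G ω - 1/2) ≤ |(p ω - q ω) * (G ω - 1/2)| := le_abs_self _
      _ = |p ω - q ω| * |G ω - 1/2| := abs_mul _ _
      _ ≤ |p ω - q ω| * (1/2) := by
          refine mul_le_mul_of_nonneg_left ?_ (abs_nonneg _)
          rw [abs_le]
          constructor <;> [linarith [hG0 ω]; linarith [hG1 ω]]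
  have : ∑ ω, |p ω - q ω| * (1/2 : ℝ) = SD p q := by
    rw [← Finset.sum_mul, SD]; ring
  linarith [key, hb, this ▸ hb]

lemma minEntropy_ge {Ω : Type*} [Fintype Ω] [Nonempty Ω] (X : Ω → ℝ) (c : ℝ)
    (hpos : ∃ x, 0 < X x) (h : ∀ x, X x ≤ (2:ℝ) ^ (-c)) : c ≤ minEntropy X := by
  obtain ⟨x₀, hx₀⟩ := hpos
  have hbdd : BddAbove (Set.range X) := (Set.finite_range X).bddAbove
  have hsup_pos : 0 < ⨆ ω, X ω := lt_of_lt_of_le hx₀ (le_ciSup hbdd x₀)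
  have hsup_le : (⨆ ω, X ω) ≤ (2:ℝ) ^ (-c) := ciSup_le h
  have hlog : Real.logb 2 (⨆ ω, X ω) ≤ -c :=
    (Real.logb_le_iff_le_rpow (by norm_num) hsup_pos).2 hsup_le
  simp only [minEntropy]
  linarith

lemma minEntropy_le' {Ω : Type*} [Fintype Ω] (Y : Ω → ℝ) (c : ℝ)
    (h : c ≤ minEntropy Y) (v : Ω) (hY0 : 0 ≤ Y v) : Y v ≤ (2:ℝ) ^ (-c) := by
  rcases eq_or_lt_of_le hY0 with h0 | hpos
  · rw [← h0]; positivity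
  · have hbdd : BddAbove (Set.range Y) := (Set.finite_range Y).bddAbove
    have hle : Y v ≤ ⨆ ω, Y ω := le_ciSup hbdd v
    have hsup_pos : 0 < ⨆ ω, Y ω := lt_of_lt_of_le hpos hle
    have hlog : Real.logb 2 (⨆ ω, Y ω) ≤ -c := by
      simp only [minEntropy] at h; linarith
    exact hle.trans ((Real.logb_le_iff_le_rpow (by norm_num) hsup_pos).1 hlog)
section GoodLemma

variable {α N r₁ : ℕ} {U₂ M : Type*} [Fintype U₂] [Fintype M]

lemma main_good (e : M ≃ (Fin N → ZMod 2))
    (rst : (Fin α → ZMod 2) → (Fin r₁ → ZMod 2) → (Fin N → ZMod 2))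
    (gg : (Fin r₁ → ZMod 2) → U₂ → M → ZMod 2)
    (X : (Fin α → ZMod 2) → ℝ) (hX0 : ∀ x, 0 ≤ X x) (hX1 : ∑ x, X x = 1)
    (Y : (Fin N → ZMod 2) → ℝ) (hY0 : ∀ v, 0 ≤ Y v) (hY1 : ∑ v, Y v = 1)
    (θ : ℝ) (hθ0 : 0 ≤ θ) (hYθ : ∀ v, Y v ≤ θ) (η : ℝ) (hη : 0 ≤ η)
    (hSD : SD (fun uy : (Fin r₁ → ZMod 2) × (Fin N → ZMod 2) =>
              (1 / 2 ^ r₁) * ∑ x, if rst x uy.1 = uy.2 then X x else 0)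
          (fun uy => (1 / 2 ^ r₁) * Y uy.2) ≤ η) :
    ∑ P0 : Fin α → ZMod 2, X P0 *
        (∑ u₁ : Fin r₁ → ZMod 2, (1/2^r₁ : ℝ) *
          ∑ u₂ : U₂, (1/(Fintype.card U₂) : ℝ) *
            ∑ m : M, (1/(Fintype.card M) : ℝ) *
              (if gg u₁ u₂ m = ip (e m) (rst P0 u₁) then (1:ℝ) else 0))
      ≤ 1/2 + Real.sqrt θ / 2 + η := by
  classical
  rcases isEmpty_or_nonempty U₂ with hU₂ | hU₂
  · have : ∀ P0 : Fin α → ZMod 2, X P0 *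
        (∑ u₁ : Fin r₁ → ZMod 2, (1/2^r₁ : ℝ) *
          ∑ u₂ : U₂, (1/(Fintype.card U₂) : ℝ) *
            ∑ m : M, (1/(Fintype.card M) : ℝ) *
              (if gg u₁ u₂ m = ip (e m) (rst P0 u₁) then (1:ℝ) else 0)) = 0 := by
      intro P0; simp
    rw [Finset.sum_congr rfl fun P0 _ => this P0]
    simp only [Finset.sum_const_zero]
    have := Real.sqrt_nonneg θ
    linarith
  have hcardM : (Fintype.card M : ℝ) = 2^N := by
    rw [Fintype.card_congr e]
    rw [show Fintype.card (Fin N → ZMod 2) = 2^N by simp only [Fintype.card_fun, ZMod.card, Fintype.card_fin]]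
    push_cast; ring
  have hcardU1 : ((Fintype.card (Fin r₁ → ZMod 2)) : ℝ) = 2^r₁ := by
    rw [show Fintype.card (Fin r₁ → ZMod 2) = 2^r₁ by simp only [Fintype.card_fun, ZMod.card, Fintype.card_fin]]
    push_cast; ring
  set G : (Fin r₁ → ZMod 2) × (Fin N → ZMod 2) → ℝ :=
    fun uv => ∑ u₂ : U₂, (1/(Fintype.card U₂) : ℝ) *
      ∑ m : M, (1/(Fintype.card M) : ℝ) *
        (if gg uv.1 u₂ m = ip (e m) uv.2 then (1:ℝ) else 0) with hG
  have hGapp : ∀ u₁ v, G (u₁, v) = ∑ u₂ : U₂, (1/(Fintype.card U₂) : ℝ) *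
      ∑ m : M, (1/(Fintype.card M) : ℝ) *
        (if gg u₁ u₂ m = ip (e m) v then (1:ℝ) else 0) := fun _ _ => rfl
  have hG0 : ∀ uv, 0 ≤ G uv := by
    intro uv
    refine Finset.sum_nonneg fun u₂ _ => mul_nonneg (by positivity)
      (Finset.sum_nonneg fun m _ => mul_nonneg (by positivity) (by split <;> norm_num))
  have hm1 : ∑ m : M, (1/(Fintype.card M) : ℝ) = 1 := by
    rw [Finset.sum_const, Finset.card_univ, nsmul_eq_mul, mul_one_div, div_self]
    rw [hcardM]; positivity
  have hu1 : ∑ u₁ : Fin r₁ → ZMod 2, (1/2^r₁ : ℝ) = 1 := by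
    rw [Finset.sum_const, Finset.card_univ, nsmul_eq_mul, hcardU1, mul_one_div, div_self]
    positivity
  have hu2 : ∑ u₂ : U₂, (1/(Fintype.card U₂) : ℝ) = 1 := by
    rw [Finset.sum_const, Finset.card_univ, nsmul_eq_mul, mul_one_div, div_self]
    have : 0 < Fintype.card U₂ := Fintype.card_pos
    positivity
  have hG1 : ∀ uv, G uv ≤ 1 := by
    intro uv
    have step : ∀ u₂ : U₂, (1/(Fintype.card U₂) : ℝ) *
        ∑ m : M, (1/(Fintype.card M) : ℝ) *
          (if gg uv.1 u₂ m = ip (e m) uv.2 then (1:ℝ) else 0)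
        ≤ (1/(Fintype.card U₂) : ℝ) := by
      intro u₂
      have hm : ∑ m : M, (1/(Fintype.card M) : ℝ) *
          (if gg uv.1 u₂ m = ip (e m) uv.2 then (1:ℝ) else 0)
          ≤ ∑ m : M, (1/(Fintype.card M) : ℝ) := by
        refine Finset.sum_le_sum fun m _ => ?_
        have : (if gg uv.1 u₂ m = ip (e m) uv.2 then (1:ℝ) else 0) ≤ 1 := by
          split <;> norm_num
        calc (1/(Fintype.card M) : ℝ) * (if gg uv.1 u₂ m = ip (e m) uv.2 then (1:ℝ) else 0)
            ≤ (1/(Fintype.card M) : ℝ) * 1 :=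
              mul_le_mul_of_nonneg_left this (by positivity)
          _ = _ := mul_one _
      calc (1/(Fintype.card U₂) : ℝ) * ∑ m : M, (1/(Fintype.card M) : ℝ) *
            (if gg uv.1 u₂ m = ip (e m) uv.2 then (1:ℝ) else 0)
          ≤ (1/(Fintype.card U₂) : ℝ) * 1 := by
            refine mul_le_mul_of_nonneg_left ?_ (by positivity)
            exact hm.trans (le_of_eq hm1)
        _ = _ := mul_one _
    calc G uv ≤ ∑ u₂ : U₂, (1/(Fintype.card U₂) : ℝ) := Finset.sum_le_sum fun u₂ _ => step u₂
      _ = 1 := hu2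
  set p' : (Fin r₁ → ZMod 2) × (Fin N → ZMod 2) → ℝ :=
    fun uy => (1 / 2 ^ r₁ : ℝ) * ∑ x, if rst x uy.1 = uy.2 then X x else 0 with hp'
  set q' : (Fin r₁ → ZMod 2) × (Fin N → ZMod 2) → ℝ :=
    fun uy => (1 / 2 ^ r₁ : ℝ) * Y uy.2 with hq'
  -- Step 1: rewrite LHS as ∑ p' * G
  have hpoint : ∀ (u₁ : Fin r₁ → ZMod 2) (P0 : Fin α → ZMod 2),
      X P0 * G (u₁, rst P0 u₁)
        = ∑ v : Fin N → ZMod 2, (if rst P0 u₁ = v then X P0 else 0) * G (u₁, v) := by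
    intro u₁ P0
    rw [Finset.sum_eq_single (rst P0 u₁)]
    · simp
    · intro v _ hv; simp [Ne.symm hv]
    · intro h; exact absurd (Finset.mem_univ _) h
  have step1 : ∑ P0 : Fin α → ZMod 2, X P0 *
        (∑ u₁ : Fin r₁ → ZMod 2, (1/2^r₁ : ℝ) * G (u₁, rst P0 u₁))
      = ∑ uv : (Fin r₁ → ZMod 2) × (Fin N → ZMod 2), p' uv * G uv := by
    calc ∑ P0 : Fin α → ZMod 2, X P0 *
          (∑ u₁ : Fin r₁ → ZMod 2, (1/2^r₁:ℝ) * G (u₁, rst P0 u₁))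
        = ∑ P0 : Fin α → ZMod 2, ∑ u₁ : Fin r₁ → ZMod 2,
            X P0 * ((1/2^r₁:ℝ) * G (u₁, rst P0 u₁)) :=
          Finset.sum_congr rfl fun P0 _ => Finset.mul_sum _ _ _
      _ = ∑ u₁ : Fin r₁ → ZMod 2, ∑ P0 : Fin α → ZMod 2,
            (1/2^r₁:ℝ) * (X P0 * G (u₁, rst P0 u₁)) := by
          rw [Finset.sum_comm]
          exact Finset.sum_congr rfl fun _ _ => Finset.sum_congr rfl fun _ _ => by ring
      _ = ∑ u₁ : Fin r₁ → ZMod 2, (1/2^r₁:ℝ) * ∑ P0 : Fin α → ZMod 2,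
            X P0 * G (u₁, rst P0 u₁) :=
          Finset.sum_congr rfl fun u₁ _ => (Finset.mul_sum _ _ _).symm
      _ = ∑ u₁ : Fin r₁ → ZMod 2, (1/2^r₁:ℝ) * ∑ P0 : Fin α → ZMod 2,
            ∑ v : Fin N → ZMod 2, (if rst P0 u₁ = v then X P0 else 0) * G (u₁, v) :=
          Finset.sum_congr rfl fun u₁ _ => by
            rw [Finset.sum_congr rfl fun P0 _ => hpoint u₁ P0]
      _ = ∑ u₁ : Fin r₁ → ZMod 2, (1/2^r₁:ℝ) * ∑ v : Fin N → ZMod 2,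
            (∑ P0 : Fin α → ZMod 2, if rst P0 u₁ = v then X P0 else 0) * G (u₁, v) := by
          refine Finset.sum_congr rfl fun u₁ _ => ?_
          rw [Finset.sum_comm]
          congr 1
          exact Finset.sum_congr rfl fun v _ => (Finset.sum_mul _ _ _).symm
      _ = ∑ uv : (Fin r₁ → ZMod 2) × (Fin N → ZMod 2), p' uv * G uv := by
          rw [Fintype.sum_prod_type]
          refine Finset.sum_congr rfl fun u₁ _ => ?_
          rw [Finset.mul_sum]
          refine Finset.sum_congr rfl fun v _ => ?_
          simp only [hp']
          ring
  -- Step 2: both p' and q' sum to 1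
  have hsum_p' : ∑ uv : (Fin r₁ → ZMod 2) × (Fin N → ZMod 2), p' uv = 1 := by
    rw [Fintype.sum_prod_type]
    have : ∀ u₁ : Fin r₁ → ZMod 2, ∑ v : Fin N → ZMod 2, p' (u₁, v) = (1/2^r₁:ℝ) := by
      intro u₁
      calc ∑ v : Fin N → ZMod 2, p' (u₁, v)
          = (1/2^r₁:ℝ) * ∑ v : Fin N → ZMod 2, ∑ x, if rst x u₁ = v then X x else 0 := by
            simp only [hp']; rw [Finset.mul_sum]
        _ = (1/2^r₁:ℝ) * ∑ x, ∑ v : Fin N → ZMod 2, if rst x u₁ = v then X x else 0 := by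
            rw [Finset.sum_comm]
        _ = (1/2^r₁:ℝ) * ∑ x, X x := by
            congr 1
            exact Finset.sum_congr rfl fun x _ => by simp
        _ = (1/2^r₁:ℝ) := by rw [hX1, mul_one]
    rw [Finset.sum_congr rfl fun u₁ _ => this u₁, hu1]
  have hsum_q' : ∑ uv : (Fin r₁ → ZMod 2) × (Fin N → ZMod 2), q' uv = 1 := by
    rw [Fintype.sum_prod_type]
    have : ∀ u₁ : Fin r₁ → ZMod 2, ∑ v : Fin N → ZMod 2, q' (u₁, v) = (1/2^r₁:ℝ) := by
      intro u₁
      calc ∑ v : Fin N → ZMod 2, q' (u₁, v)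
          = (1/2^r₁:ℝ) * ∑ v : Fin N → ZMod 2, Y v := by
            simp only [hq']; rw [Finset.mul_sum]
        _ = (1/2^r₁:ℝ) := by rw [hY1, mul_one]
    rw [Finset.sum_congr rfl fun u₁ _ => this u₁, hu1]
  -- Step 3: ∑ q' * G is at most 1/2 + √θ/2 by the Fourier bound
  have hcore : ∀ (u₁ : Fin r₁ → ZMod 2) (u₂ : U₂),
      ∑ v : Fin N → ZMod 2, Y v * ∑ m : M, (1/(Fintype.card M) : ℝ) *
          (if gg u₁ u₂ m = ip (e m) v then (1:ℝ) else 0)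
        ≤ 1/2 + Real.sqrt θ / 2 := by
    intro u₁ u₂
    have hsum_m : ∀ v, ∑ m : M, (1/(Fintype.card M) : ℝ) *
        (if gg u₁ u₂ m = ip (e m) v then (1:ℝ) else 0)
        = (1/2^N : ℝ) * ∑ s : Fin N → ZMod 2,
            (if gg u₁ u₂ (e.symm s) = ip s v then (1:ℝ) else 0) := by
      intro v
      rw [← Equiv.sum_comp e.symm
        (fun m => (1/(Fintype.card M) : ℝ) * (if gg u₁ u₂ m = ip (e m) v then (1:ℝ) else 0))]
      rw [← Finset.mul_sum, hcardM]
      congr 1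
      exact Finset.sum_congr rfl fun s _ => by rw [Equiv.apply_symm_apply]
    rw [Finset.sum_congr rfl fun v _ => by rw [hsum_m v]]
    exact core_gl (fun s => gg u₁ u₂ (e.symm s)) Y hY0 hY1 θ hθ0 hYθ
  have hq'G : ∑ uv : (Fin r₁ → ZMod 2) × (Fin N → ZMod 2), q' uv * G uv
      ≤ 1/2 + Real.sqrt θ / 2 := by
    rw [Fintype.sum_prod_type]
    have inner : ∀ u₁ : Fin r₁ → ZMod 2, ∑ v : Fin N → ZMod 2, q' (u₁, v) * G (u₁, v)
        ≤ (1/2^r₁:ℝ) * (1/2 + Real.sqrt θ / 2) := by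
      intro u₁
      have swap : ∑ v : Fin N → ZMod 2, Y v * G (u₁, v)
          = ∑ u₂ : U₂, (1/(Fintype.card U₂) : ℝ) *
              ∑ v : Fin N → ZMod 2, Y v * ∑ m : M, (1/(Fintype.card M) : ℝ) *
                (if gg u₁ u₂ m = ip (e m) v then (1:ℝ) else 0) := by
        calc ∑ v : Fin N → ZMod 2, Y v * G (u₁, v)
            = ∑ v : Fin N → ZMod 2, ∑ u₂ : U₂, Y v * ((1/(Fintype.card U₂) : ℝ) *
                ∑ m : M, (1/(Fintype.card M) : ℝ) *
                  (if gg u₁ u₂ m = ip (e m) v then (1:ℝ) else 0)) := by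
              refine Finset.sum_congr rfl fun v _ => ?_
              rw [hGapp, Finset.mul_sum]
          _ = ∑ u₂ : U₂, ∑ v : Fin N → ZMod 2, (1/(Fintype.card U₂) : ℝ) *
                (Y v * ∑ m : M, (1/(Fintype.card M) : ℝ) *
                  (if gg u₁ u₂ m = ip (e m) v then (1:ℝ) else 0)) := by
              rw [Finset.sum_comm]
              exact Finset.sum_congr rfl fun _ _ => Finset.sum_congr rfl fun _ _ => by ring
          _ = _ := Finset.sum_congr rfl fun u₂ _ => (Finset.mul_sum _ _ _).symm
      have hbound : ∑ v : Fin N → ZMod 2, Y v * G (u₁, v) ≤ 1/2 + Real.sqrt θ / 2 := by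
        rw [swap]
        calc ∑ u₂ : U₂, (1/(Fintype.card U₂) : ℝ) *
              ∑ v : Fin N → ZMod 2, Y v * ∑ m : M, (1/(Fintype.card M) : ℝ) *
                (if gg u₁ u₂ m = ip (e m) v then (1:ℝ) else 0)
            ≤ ∑ u₂ : U₂, (1/(Fintype.card U₂) : ℝ) * (1/2 + Real.sqrt θ / 2) := by
              refine Finset.sum_le_sum fun u₂ _ => ?_
              exact mul_le_mul_of_nonneg_left (hcore u₁ u₂) (by positivity)
          _ = 1/2 + Real.sqrt θ / 2 := by rw [← Finset.sum_mul, hu2, one_mul]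
      calc ∑ v : Fin N → ZMod 2, q' (u₁, v) * G (u₁, v)
          = (1/2^r₁:ℝ) * ∑ v : Fin N → ZMod 2, Y v * G (u₁, v) := by
            rw [Finset.mul_sum]
            refine Finset.sum_congr rfl fun v _ => ?_
            simp only [hq']; ring
        _ ≤ (1/2^r₁:ℝ) * (1/2 + Real.sqrt θ / 2) :=
            mul_le_mul_of_nonneg_left hbound (by positivity)
    calc ∑ u₁ : Fin r₁ → ZMod 2, ∑ v : Fin N → ZMod 2, q' (u₁, v) * G (u₁, v)
        ≤ ∑ u₁ : Fin r₁ → ZMod 2, (1/2^r₁:ℝ) * (1/2 + Real.sqrt θ / 2) :=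
          Finset.sum_le_sum fun u₁ _ => inner u₁
      _ = 1/2 + Real.sqrt θ / 2 := by rw [← Finset.sum_mul, hu1, one_mul]
  -- Combine
  have goalrw : ∑ P0 : Fin α → ZMod 2, X P0 *
        (∑ u₁ : Fin r₁ → ZMod 2, (1/2^r₁ : ℝ) *
          ∑ u₂ : U₂, (1/(Fintype.card U₂) : ℝ) *
            ∑ m : M, (1/(Fintype.card M) : ℝ) *
              (if gg u₁ u₂ m = ip (e m) (rst P0 u₁) then (1:ℝ) else 0))
      = ∑ uv : (Fin r₁ → ZMod 2) × (Fin N → ZMod 2), p' uv * G uv := step1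
  rw [goalrw]
  have := sd_transfer p' q' G (hsum_p'.trans hsum_q'.symm) hG0 hG1
  have hSD' : SD p' q' ≤ η := hSD
  linarith
end GoodLemma

lemma wavg01 {I : Type*} [Fintype I] (c : ℝ) (hc0 : 0 ≤ c) (hc1 : ∑ _i : I, c = 1)
    (g : I → ℝ) (hg : ∀ i, 0 ≤ g i ∧ g i ≤ 1) :
    0 ≤ ∑ i, c * g i ∧ ∑ i, c * g i ≤ 1 := by
  constructor
  · exact Finset.sum_nonneg fun i _ => mul_nonneg hc0 (hg i).1
  · calc ∑ i, c * g i ≤ ∑ _i : I, c * 1 :=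
        Finset.sum_le_sum fun i _ => mul_le_mul_of_nonneg_left (hg i).2 hc0
      _ = 1 := by simp only [mul_one]; exact hc1


/-- **Any learner with few parameters fails to learn subsampled inner products.**
`P` is a uniform `α`-bit key; the model `Z` (arbitrary, jointly distributed with `P`) has
support of size at most `2^(α/2)`; an example consists of the instance
`([u₁], [u₂], m, Enc(m) + Q|_{samp₂(u₂)})` with label `⟨m, P|_{samp₁(u₁)}⟩` over 𝔽₂,
for fresh independent uniform `u₁, u₂, m`.  Under the stated sampler property of `samp₁`,
any family of classifiers `f_z` predicts the label of a fresh example with probability at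
most `1/2 + 2^(-α/4) + η + 2^(-kℓ/10)`. -/
theorem few_parameters_cannot_learn
    (α k ℓ n r₁ r₂ β : ℕ) (hkn : k ≤ n) (hn : n ≤ 2 ^ ℓ) (η : ℝ) (hη : 0 ≤ η)
    (F : Type*) [Field F] [Fintype F] [DecidableEq F] (hF : Fintype.card F = 2 ^ ℓ)
    (a : Fin n → F) (ha : Function.Injective a)
    (toF : (Fin ℓ → ZMod 2) ≃ F)
    (samp₁ : (Fin r₁ → ZMod 2) → {S : Finset (Fin α) // S.card = k * ℓ})
    (hsamp₁ : ∀ X : (Fin α → ZMod 2) → ℝ, (∀ x, 0 ≤ X x) → (∑ x, X x = 1) →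
      (α : ℝ) / 4 ≤ minEntropy X →
      ∃ Y : (Fin (k * ℓ) → ZMod 2) → ℝ, (∀ y, 0 ≤ Y y) ∧ (∑ y, Y y = 1) ∧
        (k * ℓ : ℝ) / 5 ≤ minEntropy Y ∧
        SD (fun uy : (Fin r₁ → ZMod 2) × (Fin (k * ℓ) → ZMod 2) =>
              (1 / 2 ^ r₁) *
                ∑ x, if restrict x (samp₁ uy.1).1 (samp₁ uy.1).2 = uy.2 then X x else 0)
          (fun uy => (1 / 2 ^ r₁) * Y uy.2) ≤ η)
    (Q : Fin β → ZMod 2)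
    (samp₂ : (Fin r₂ → ZMod 2) → {S : Finset (Fin β) // S.card = n * ℓ})
    (T₁ T₂ : Type*)
    (enc₁ : (Fin r₁ → ZMod 2) → T₁) (henc₁ : Function.Injective enc₁)
    (enc₂ : (Fin r₂ → ZMod 2) → T₂) (henc₂ : Function.Injective enc₂)
    (B : Type*) [Fintype B]
    (p : (Fin α → ZMod 2) × B → ℝ)
    (hp0 : ∀ w, 0 ≤ p w) (hp1 : ∑ w, p w = 1)
    (hPunif : ∀ P0 : Fin α → ZMod 2, ∑ b, p (P0, b) = 1 / 2 ^ α)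
    (hsupp : (((Finset.univ : Finset B).filter (fun b => (∑ P0, p (P0, b)) ≠ 0)).card : ℝ)
      ≤ (2 : ℝ) ^ ((α : ℝ) / 2))
    (f : B → T₁ × T₂ × (Fin k → F) × (Fin n → F) → ZMod 2) :
    ∑ w : (Fin α → ZMod 2) × B, ∑ u₁ : Fin r₁ → ZMod 2, ∑ u₂ : Fin r₂ → ZMod 2,
        ∑ m : Fin k → F,
          p w * (1 / 2 ^ r₁) * (1 / 2 ^ r₂) * (1 / (Fintype.card F : ℝ) ^ k) *
            (if f w.2 (enc₁ u₁, enc₂ u₂, m,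
                  fun i => rsEnc k n a m i +
                    vecOf ℓ n toF (restrict Q (samp₂ u₂).1 (samp₂ u₂).2) i) =
                ip (bitsOf ℓ k toF m) (restrict w.1 (samp₁ u₁).1 (samp₁ u₁).2)
              then 1 else 0) ≤
      1 / 2 + (2 : ℝ) ^ (-(α : ℝ) / 4) + η + (2 : ℝ) ^ (-(k * ℓ : ℝ) / 10) := by
    classical
  -- the equivalence between messages and bit strings
  have hee : ∃ e : (Fin k → F) ≃ (Fin (k*ℓ) → ZMod 2), ⇑e = bitsOf ℓ k toF :=
    ⟨{ toFun := bitsOf ℓ k toF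
       invFun := vecOf ℓ k toF
       left_inv := by
         intro m; funext i
         simp [vecOf, bitsOf]
       right_inv := by
         intro y; funext j
         simp only [vecOf, bitsOf, Equiv.symm_apply_apply]
         rw [Prod.mk.eta, Equiv.apply_symm_apply] }, rfl⟩
  obtain ⟨e, he⟩ := hee
  set q : B → ℝ := fun b => ∑ P0, p (P0, b) with hq
  set A : B → (Fin α → ZMod 2) → ℝ := fun b P0 =>
    ∑ u₁ : Fin r₁ → ZMod 2, (1/2^r₁ : ℝ) *
      ∑ u₂ : Fin r₂ → ZMod 2, (1/(Fintype.card (Fin r₂ → ZMod 2)) : ℝ) *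
        ∑ m : Fin k → F, (1/(Fintype.card (Fin k → F)) : ℝ) *
          (if f b (enc₁ u₁, enc₂ u₂, m,
                fun i => rsEnc k n a m i +
                  vecOf ℓ n toF (restrict Q (samp₂ u₂).1 (samp₂ u₂).2) i) =
              ip (bitsOf ℓ k toF m) (restrict P0 (samp₁ u₁).1 (samp₁ u₁).2)
            then (1:ℝ) else 0) with hA
  have hcard2 : ∀ r : ℕ, ((Fintype.card (Fin r → ZMod 2)) : ℝ) = 2^r := by
    intro r
    rw [show Fintype.card (Fin r → ZMod 2) = 2^r by simp only [Fintype.card_fun, ZMod.card, Fintype.card_fin]]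
    push_cast; ring
  have hcardM : ((Fintype.card (Fin k → F)) : ℝ) = ((Fintype.card F : ℝ))^k := by
    rw [Fintype.card_fun, Fintype.card_fin]
    push_cast; ring
  have hcardFpos : (0:ℝ) < (Fintype.card F : ℝ) := by
    exact_mod_cast Fintype.card_pos
  -- constant sums
  have hsum_u1 : ∑ _u₁ : Fin r₁ → ZMod 2, (1/2^r₁ : ℝ) = 1 := by
    rw [Finset.sum_const, Finset.card_univ, nsmul_eq_mul, hcard2 r₁, mul_one_div,
      div_self (by positivity)]
  have hsum_u2 : ∑ _u₂ : Fin r₂ → ZMod 2, (1/(Fintype.card (Fin r₂ → ZMod 2)) : ℝ) = 1 := by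
    rw [Finset.sum_const, Finset.card_univ, nsmul_eq_mul, hcard2 r₂, mul_one_div,
      div_self (by positivity)]
  have hsum_m : ∑ _m : Fin k → F, (1/(Fintype.card (Fin k → F)) : ℝ) = 1 := by
    rw [Finset.sum_const, Finset.card_univ, nsmul_eq_mul, hcardM, mul_one_div,
      div_self (by positivity)]
  have hind01 : ∀ (x y : ZMod 2), 0 ≤ (if x = y then (1:ℝ) else 0) ∧
      (if x = y then (1:ℝ) else 0) ≤ 1 := by
    intro x y; constructor <;> split <;> norm_num
  -- A is in [0,1]
  have hA01 : ∀ b P0, 0 ≤ A b P0 ∧ A b P0 ≤ 1 := by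
    intro b P0
    simp only [hA]
    exact wavg01 _ (by positivity) hsum_u1 _ (fun u₁ =>
      wavg01 _ (by positivity) hsum_u2 _ (fun u₂ =>
        wavg01 _ (by positivity) hsum_m _ (fun m => hind01 _ _)))
  -- rewriting the LHS
  have hLHS : (∑ w : (Fin α → ZMod 2) × B, ∑ u₁ : Fin r₁ → ZMod 2, ∑ u₂ : Fin r₂ → ZMod 2,
        ∑ m : Fin k → F,
          p w * (1 / 2 ^ r₁) * (1 / 2 ^ r₂) * (1 / (Fintype.card F : ℝ) ^ k) *
            (if f w.2 (enc₁ u₁, enc₂ u₂, m,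
                  fun i => rsEnc k n a m i +
                    vecOf ℓ n toF (restrict Q (samp₂ u₂).1 (samp₂ u₂).2) i) =
                ip (bitsOf ℓ k toF m) (restrict w.1 (samp₁ u₁).1 (samp₁ u₁).2)
              then 1 else 0))
      = ∑ b : B, ∑ P0 : Fin α → ZMod 2, p (P0, b) * A b P0 := by
    rw [Fintype.sum_prod_type, Finset.sum_comm]
    refine Finset.sum_congr rfl fun b _ => Finset.sum_congr rfl fun P0 _ => ?_
    simp only [hA, Finset.mul_sum]
    refine Finset.sum_congr rfl fun u₁ _ => Finset.sum_congr rfl fun u₂ _ =>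
      Finset.sum_congr rfl fun m _ => ?_
    rw [hcard2 r₂, hcardM]
    ring
  -- set the min-entropy threshold for Y and the bound on √θ
  set θ : ℝ := (2:ℝ) ^ (-((k * ℓ : ℝ) / 5)) with hθdef
  have hθ0 : (0:ℝ) ≤ θ := by rw [hθdef]; positivity
  have hsq : Real.sqrt θ = (2:ℝ) ^ (-(k * ℓ : ℝ) / 10) := by
    rw [show θ = ((2:ℝ) ^ (-(k * ℓ : ℝ) / 10))^(2:ℕ) from ?_,
      Real.sqrt_sq (by positivity)]
    rw [← Real.rpow_natCast ((2:ℝ) ^ (-(k * ℓ : ℝ) / 10)) 2,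
      ← Real.rpow_mul (by norm_num : (0:ℝ) ≤ 2)]
    rw [hθdef]
    congr 1
    push_cast
    ring
  have hpow10pos : (0:ℝ) < (2:ℝ) ^ (-(k * ℓ : ℝ) / 10) := by positivity
  have hsqrt_half : Real.sqrt θ / 2 ≤ (2:ℝ) ^ (-(k * ℓ : ℝ) / 10) := by
    rw [hsq]; linarith
  -- threshold for good b's
  set c' : ℝ := (2:ℝ) ^ (-(3*(α:ℝ)/4)) with hc'
  have hc'pos : (0:ℝ) < c' := by rw [hc']; positivity
  have hq0 : ∀ b, 0 ≤ q b := fun b => Finset.sum_nonneg fun P0 _ => hp0 _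
  have hq1 : ∑ b, q b = 1 := by
    rw [hq]
    rw [Fintype.sum_prod_type] at hp1
    rw [Finset.sum_comm]
    exact hp1
  -- the per-b bound in the good case
  have hgoodb : ∀ b : B, c' ≤ q b →
      ∑ P0 : Fin α → ZMod 2, p (P0, b) * A b P0
        ≤ q b * (1/2 + η + (2:ℝ) ^ (-(k * ℓ : ℝ) / 10)) := by
    intro b hb
    have hqbpos : 0 < q b := lt_of_lt_of_le hc'pos hb
    set X : (Fin α → ZMod 2) → ℝ := fun P0 => p (P0, b) / q b with hX
    have hX0 : ∀ x, 0 ≤ X x := fun x => div_nonneg (hp0 _) hqbpos.le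
    have hX1 : ∑ x, X x = 1 := by
      rw [hX, ← Finset.sum_div]
      exact div_self hqbpos.ne'
    have hXle : ∀ x, X x ≤ (2:ℝ) ^ (-((α:ℝ)/4)) := by
      intro x
      have hple : p (x, b) ≤ 1/2^α := by
        rw [← hPunif x]
        exact Finset.single_le_sum (f := fun b' => p (x, b')) (fun b' _ => hp0 _)
          (Finset.mem_univ b)
      have h1 : (1/2^α : ℝ) = (2:ℝ) ^ (-(α:ℝ)) := by
        rw [Real.rpow_neg (by norm_num : (0:ℝ) ≤ 2), Real.rpow_natCast, one_div]
      have h2 : X x ≤ (2:ℝ) ^ (-(α:ℝ)) / c' := by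
        rw [hX, ← h1]
        exact div_le_div₀ (by positivity) hple hc'pos hb
      have h3 : (2:ℝ) ^ (-(α:ℝ)) / c' = (2:ℝ) ^ (-((α:ℝ)/4)) := by
        rw [hc', ← Real.rpow_sub (by norm_num : (0:ℝ) < 2)]
        congr 1
        ring
      linarith [h2, h3.le, h3.ge]
    have hXpos : ∃ x, 0 < X x := by
      obtain ⟨x, hx⟩ := Finset.exists_ne_zero_of_sum_ne_zero
        (by rw [hX1]; norm_num : ∑ x, X x ≠ 0)
      exact ⟨x, lt_of_le_of_ne (hX0 x) (Ne.symm hx.2)⟩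
    have hminX : (α : ℝ) / 4 ≤ minEntropy X :=
      minEntropy_ge X ((α:ℝ)/4) hXpos hXle
    obtain ⟨Y, hY0, hY1, hYme, hSD⟩ := hsamp₁ X hX0 hX1 hminX
    have hYθ : ∀ v, Y v ≤ θ := by
      intro v
      rw [hθdef]
      exact minEntropy_le' Y ((k * ℓ : ℝ)/5) hYme v (hY0 v)
    have hgood := main_good e
      (fun P0 u₁ => restrict P0 (samp₁ u₁).1 (samp₁ u₁).2)
      (fun u₁ u₂ m => f b (enc₁ u₁, enc₂ u₂, m,
        fun i => rsEnc k n a m i +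
          vecOf ℓ n toF (restrict Q (samp₂ u₂).1 (samp₂ u₂).2) i))
      X hX0 hX1 Y hY0 hY1 θ hθ0 hYθ η hη hSD
    simp only [he] at hgood
    have h1 : ∑ P0, X P0 * A b P0 ≤ 1/2 + Real.sqrt θ / 2 + η := by
      simp only [hA]
      exact hgood
    have h2 : ∑ P0 : Fin α → ZMod 2, p (P0, b) * A b P0
        = q b * ∑ P0, X P0 * A b P0 := by
      rw [Finset.mul_sum]
      refine Finset.sum_congr rfl fun P0 _ => ?_
      rw [hX]
      field_simp
    rw [h2]
    calc q b * ∑ P0, X P0 * A b P0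
        ≤ q b * (1/2 + Real.sqrt θ / 2 + η) :=
          mul_le_mul_of_nonneg_left h1 hqbpos.le
      _ ≤ q b * (1/2 + η + (2:ℝ) ^ (-(k * ℓ : ℝ) / 10)) := by
          refine mul_le_mul_of_nonneg_left ?_ hqbpos.le
          linarith [hsqrt_half]
  -- split into good and bad b's
  rw [hLHS, ← Finset.sum_filter_add_sum_filter_not Finset.univ (fun b => c' ≤ q b)
    (fun b => ∑ P0 : Fin α → ZMod 2, p (P0, b) * A b P0)]
  have hgoodsum : ∑ b ∈ Finset.univ.filter (fun b => c' ≤ q b),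
      ∑ P0 : Fin α → ZMod 2, p (P0, b) * A b P0
      ≤ 1/2 + η + (2:ℝ) ^ (-(k * ℓ : ℝ) / 10) := by
    have hCpos : (0:ℝ) ≤ 1/2 + η + (2:ℝ) ^ (-(k * ℓ : ℝ) / 10) := by positivity
    calc ∑ b ∈ Finset.univ.filter (fun b => c' ≤ q b),
          ∑ P0 : Fin α → ZMod 2, p (P0, b) * A b P0
        ≤ ∑ b ∈ Finset.univ.filter (fun b => c' ≤ q b),
            q b * (1/2 + η + (2:ℝ) ^ (-(k * ℓ : ℝ) / 10)) := by
          refine Finset.sum_le_sum fun b hb => ?_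
          exact hgoodb b (Finset.mem_filter.1 hb).2
      _ = (∑ b ∈ Finset.univ.filter (fun b => c' ≤ q b), q b) *
            (1/2 + η + (2:ℝ) ^ (-(k * ℓ : ℝ) / 10)) := (Finset.sum_mul _ _ _).symm
      _ ≤ 1 * (1/2 + η + (2:ℝ) ^ (-(k * ℓ : ℝ) / 10)) := by
          refine mul_le_mul_of_nonneg_right ?_ hCpos
          rw [← hq1]
          exact Finset.sum_le_sum_of_subset_of_nonneg (Finset.filter_subset _ _)
            (fun b _ _ => hq0 b)
      _ = 1/2 + η + (2:ℝ) ^ (-(k * ℓ : ℝ) / 10) := one_mul _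
  have hbadsum : ∑ b ∈ Finset.univ.filter (fun b => ¬ c' ≤ q b),
      ∑ P0 : Fin α → ZMod 2, p (P0, b) * A b P0
      ≤ (2:ℝ) ^ (-(α:ℝ)/4) := by
    have step1 : ∑ b ∈ Finset.univ.filter (fun b => ¬ c' ≤ q b),
        ∑ P0 : Fin α → ZMod 2, p (P0, b) * A b P0
        ≤ ∑ b ∈ Finset.univ.filter (fun b => ¬ c' ≤ q b), q b := by
      refine Finset.sum_le_sum fun b _ => ?_
      calc ∑ P0 : Fin α → ZMod 2, p (P0, b) * A b P0
          ≤ ∑ P0 : Fin α → ZMod 2, p (P0, b) * 1 :=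
            Finset.sum_le_sum fun P0 _ =>
              mul_le_mul_of_nonneg_left (hA01 b P0).2 (hp0 _)
        _ = q b := by rw [hq]; simp
    have step2 : ∑ b ∈ Finset.univ.filter (fun b => ¬ c' ≤ q b), q b
        = ∑ b ∈ (Finset.univ.filter (fun b => ¬ c' ≤ q b)).filter (fun b => q b ≠ 0),
            q b := (Finset.sum_filter_ne_zero _).symm
    have hsub : (Finset.univ.filter (fun b => ¬ c' ≤ q b)).filter (fun b => q b ≠ 0)
        ⊆ Finset.univ.filter (fun b => (∑ P0, p (P0, b)) ≠ 0) := by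
      intro x hx
      simp only [Finset.mem_filter, Finset.mem_univ, true_and] at hx ⊢
      exact hx.2
    have step3 : ∑ b ∈ (Finset.univ.filter (fun b => ¬ c' ≤ q b)).filter
          (fun b => q b ≠ 0), q b
        ≤ (((Finset.univ.filter (fun b => ¬ c' ≤ q b)).filter
            (fun b => q b ≠ 0)).card : ℝ) * c' := by
      rw [← nsmul_eq_mul]
      refine Finset.sum_le_card_nsmul _ _ c' fun b hb => ?_
      have := (Finset.mem_filter.1 (Finset.mem_filter.1 hb).1).2
      exact (not_le.1 this).le
    have step4 : (((Finset.univ.filter (fun b => ¬ c' ≤ q b)).filter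
          (fun b => q b ≠ 0)).card : ℝ) * c'
        ≤ (2:ℝ) ^ ((α:ℝ)/2) * c' := by
      refine mul_le_mul_of_nonneg_right ?_ hc'pos.le
      refine le_trans ?_ hsupp
      exact_mod_cast Finset.card_le_card hsub
    have step5 : (2:ℝ) ^ ((α:ℝ)/2) * c' = (2:ℝ) ^ (-(α:ℝ)/4) := by
      rw [hc', ← Real.rpow_add (by norm_num : (0:ℝ) < 2)]
      congr 1
      ring
    linarith [step1, step2.le, step3, step4, step5.le, step5.ge]
  have hfinal := add_le_add hgoodsum hbadsum
  linarith [hfinal]
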